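/- Let H be an infinite-dimensional separable complex Hilbert space and let (f_k)_{k∈ℕ} be a frame for H with synthesis operator T : ℓ²(ℕ) → H, T((c_k)_k) = Σ_k c_k f_k. Then for every ε ∈ (0,1) there exist three orthonormal bases (e_k¹)_{k∈ℕ}, (e_k²)_{k∈ℕ}, (e_k³)_{k∈ℕ} of H such that f_k = (‖T‖/(1−ε))·(e_k¹ + e_k² + e_k³) for every k ∈ ℕ. -/

import Mathlib

open scoped InnerProductSpace

lemma exists_nat_hilbertBasis {H : Type*} [NormedAddCommGroup H] [InnerProductSpace ℂ H]
    [CompleteSpace H] [TopologicalSpace.SeparableSpace H]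
    (hinf : ¬ FiniteDimensional ℂ H) :
    Nonempty (HilbertBasis ℕ ℂ H) := by
  obtain ⟨w, b, hb⟩ := exists_hilbertBasis ℂ H
  have hw_on : Orthonormal ℂ ((↑) : w → H) := hb ▸ b.orthonormal
  have hdist : ∀ x : w, ∀ y : w, x ≠ y → (1 : ℝ) ≤ dist (x : H) (y : H) := by
    intro x y hxy
    have h1 : ‖(x:H) - (y:H)‖ ^ 2 = 2 := by
      rw [@norm_sub_sq ℂ, hw_on.1 x, hw_on.1 y, hw_on.2 hxy]
      norm_num
    rw [dist_eq_norm]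
    nlinarith [norm_nonneg ((x:H) - (y:H))]
  -- countability via disjoint balls
  have hcount : Countable w := by
    have hd : Pairwise (Function.onFun Disjoint fun x : w => Metric.ball (x : H) (1/2 : ℝ)) := by
      intro x y hxy
      apply Metric.ball_disjoint_ball
      have := hdist x y hxy; norm_num; linarith
    exact hd.countable_of_isOpen_disjoint (fun _ => Metric.isOpen_ball)
      (fun x => Metric.nonempty_ball.2 (by norm_num))
  -- w is infinite
  have hinfw : Infinite w := by
    rw [Set.infinite_coe_iff]
    intro hfin
    apply hinf
    have hdense := b.dense_span
    rw [hb] at hdense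
    have hsp : (Submodule.span ℂ (Set.range ((↑) : w → H))).topologicalClosure = ⊤ :=
      hdense
    rw [Subtype.range_coe] at hsp
    have hfd : FiniteDimensional ℂ (Submodule.span ℂ w) :=
      FiniteDimensional.span_of_finite ℂ hfin
    have hclosed : IsClosed (Submodule.span ℂ w : Set H) :=
      (Submodule.span ℂ w).closed_of_finiteDimensional
    have : Submodule.span ℂ w = ⊤ := by
      rw [← hsp, IsClosed.submodule_topologicalClosure_eq hclosed]
    have : FiniteDimensional ℂ (⊤ : Submodule ℂ H) := this ▸ hfd
    exact (Submodule.topEquiv : (⊤ : Submodule ℂ H) ≃ₗ[ℂ] H).finiteDimensional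
  obtain ⟨d⟩ := nonempty_denumerable w
  let e : ℕ ≃ w := (Denumerable.eqv w).symm
  have hv : Orthonormal ℂ (fun n => ((e n : w) : H)) :=
    hw_on.comp e e.injective
  have hsp : ⊤ ≤ (Submodule.span ℂ (Set.range fun n => ((e n : w) : H))).topologicalClosure := by
    have : Set.range (fun n => ((e n : w) : H)) = Set.range ((↑) : w → H) := by
      show Set.range (((↑) : w → H) ∘ e) = _
      rw [Set.range_comp ((↑) : w → H) e, e.surjective.range_eq, Set.image_univ]
    rw [this, Subtype.range_coe]
    have hdense := b.dense_span
    rw [hb, Subtype.range_coe] at hdense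
    rw [hdense]
  exact ⟨HilbertBasis.mk hv hsp⟩


lemma sum_two_unitaries {A : Type*} [CStarAlgebra A] [PartialOrder A] [StarOrderedRing A] [Nontrivial A]
    (b : A) (hb : IsUnit b) (hnorm : ‖b‖ < 1) :
    ∃ v w : A, v ∈ unitary A ∧ w ∈ unitary A ∧ v + w = b + b := by
  set h : A := star b * b with hh
  have hsa : IsSelfAdjoint h := IsSelfAdjoint.star_mul_self b
  have hnormal : IsStarNormal h := hsa.isStarNormal
  have hhu : IsUnit h := hb.star.mul hb
  -- spectrum facts
  have hspec : ∀ z ∈ spectrum ℂ h, z = (z.re : ℂ) ∧ 0 < z.re ∧ z.re < 1 := by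
    intro z hz
    have hre : z = (z.re : ℂ) := hsa.mem_spectrum_eq_re hz
    have hmem : z.re ∈ spectrum ℝ h := by
      rw [← spectrum.algebraMap_mem_iff ℂ]
      simpa [← hre] using hz
    have h0 : 0 ≤ z.re := spectrum_nonneg_of_nonneg (star_mul_self_nonneg b) hmem
    have hne : z ≠ 0 := by
      intro h0'
      exact spectrum.zero_notMem ℂ hhu (h0' ▸ hz)
    have h0' : 0 < z.re := by
      rcases h0.lt_or_eq with h | h
      · exact h
      · exact absurd (by rw [hre, ← h]; simp) hne
    have hub : ‖z‖ ≤ ‖h‖ := spectrum.norm_le_norm_of_mem hz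
    have hnh : ‖h‖ < 1 := by
      rw [hh, CStarRing.norm_star_mul_self]
      nlinarith [norm_nonneg b]
    have : |z.re| < 1 := by
      calc |z.re| = ‖z‖ := by rw [hre]; simp
        _ < 1 := lt_of_le_of_lt hub hnh
    exact ⟨hre, h0', lt_of_abs_lt this⟩
  -- the functions
  set g : ℂ → ℝ := fun z => Real.sqrt ((1 - z.re) / z.re) with hg
  set fp : ℂ → ℂ := fun z => 1 + (g z : ℂ) * Complex.I with hfp
  set fm : ℂ → ℂ := fun z => 1 - (g z : ℂ) * Complex.I with hfm
  have hgcont : ContinuousOn g (spectrum ℂ h) := by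
    apply Real.continuous_sqrt.comp_continuousOn
    apply ContinuousOn.div
    · exact (continuous_const.sub Complex.continuous_re).continuousOn
    · exact Complex.continuous_re.continuousOn
    · intro z hz
      exact (hspec z hz).2.1.ne'
  have hpcont : ContinuousOn fp (spectrum ℂ h) :=
    continuousOn_const.add ((Complex.continuous_ofReal.comp_continuousOn hgcont).mul
      continuousOn_const)
  have hmcont : ContinuousOn fm (spectrum ℂ h) :=
    continuousOn_const.sub ((Complex.continuous_ofReal.comp_continuousOn hgcont).mul
      continuousOn_const)
  set u : A := cfc fp h with hu
  have hstaru : star u = cfc fm h := by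
    rw [hu, ← cfc_star]
    apply cfc_congr
    intro z _
    simp [hfp, hfm, sub_eq_add_neg]
  -- pointwise facts
  have hsq : ∀ z ∈ spectrum ℂ h, (g z : ℂ) ^ 2 = (1 - z) / z := by
    intro z hz
    obtain ⟨hre, h0, h1⟩ := hspec z hz
    have : (g z) ^ 2 = (1 - z.re) / z.re := by
      rw [hg]
      exact Real.sq_sqrt (div_nonneg (by linarith) h0.le)
    calc (g z : ℂ) ^ 2 = (((g z) ^ 2 : ℝ) : ℂ) := by push_cast; ring
      _ = (((1 - z.re) / z.re : ℝ) : ℂ) := by rw [this]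
      _ = (1 - z) / z := by rw [hre]; push_cast; simp
  have key1 : ∀ z ∈ spectrum ℂ h, fm z * (z * fp z) = 1 := by
    intro z hz
    obtain ⟨hre, h0, h1⟩ := hspec z hz
    have hz0 : z ≠ 0 := by
      rw [hre]; exact_mod_cast (Complex.ofReal_ne_zero).2 h0.ne'
    have : fm z * fp z = 1 / z := by
      have : fm z * fp z = 1 - ((g z : ℂ) * Complex.I) ^ 2 := by rw [hfp, hfm]; ring
      rw [this, mul_pow, Complex.I_sq, hsq z hz]
      field_simp
      ring
    calc fm z * (z * fp z) = (fm z * fp z) * z := by ring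
      _ = (1 / z) * z := by rw [this]
      _ = 1 := by field_simp
  have key2 : ∀ z ∈ spectrum ℂ h, fp z * (z * fm z) = 1 := by
    intro z hz
    have := key1 z hz
    calc fp z * (z * fm z) = fm z * (z * fp z) := by ring
      _ = 1 := this
  have hmidp : cfc (fun z : ℂ => z * fp z) h = h * u := by
    rw [cfc_mul (f := fun z : ℂ => z) (g := fp) h continuous_id.continuousOn hpcont, cfc_id' ℂ h]
  have hmidm : cfc (fun z : ℂ => z * fm z) h = h * star u := by
    rw [cfc_mul (f := fun z : ℂ => z) (g := fm) h continuous_id.continuousOn hmcont, cfc_id' ℂ h, hstaru]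
  have c1 : star u * (h * u) = 1 := by
    rw [hstaru, ← hmidp,
      ← cfc_mul fm (fun z => z * fp z) h hmcont ((continuous_id.continuousOn.mul hpcont : ContinuousOn (fun z : ℂ => z * fp z) _)),
      cfc_congr (g := fun _ : ℂ => (1:ℂ)) key1, cfc_const_one ℂ h]
  have c2 : u * (h * star u) = 1 := by
    rw [hu, ← hmidm,
      ← cfc_mul fp (fun z => z * fm z) h hpcont ((continuous_id.continuousOn.mul hmcont : ContinuousOn (fun z : ℂ => z * fm z) _)),
      cfc_congr (g := fun _ : ℂ => (1:ℂ)) key2, cfc_const_one ℂ h]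
  have c3 : (h * star u) * u = 1 := by
    rw [← hmidm, hu,
      ← cfc_mul (fun z => z * fm z) fp h ((continuous_id.continuousOn.mul hmcont : ContinuousOn (fun z : ℂ => z * fm z) _)) hpcont]
    rw [cfc_congr (g := fun _ : ℂ => (1:ℂ)) (fun z hz => by
      have := key1 z hz; show (z * fm z) * fp z = 1; linear_combination this),
      cfc_const_one ℂ h]
  have c4 : (h * u) * star u = 1 := by
    rw [← hmidp, hstaru,
      ← cfc_mul (fun z => z * fp z) fm h ((continuous_id.continuousOn.mul hpcont : ContinuousOn (fun z : ℂ => z * fp z) _)) hmcont]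
    rw [cfc_congr (g := fun _ : ℂ => (1:ℂ)) (fun z hz => by
      have := key2 z hz; show (z * fp z) * fm z = 1; linear_combination this),
      cfc_const_one ℂ h]
  have hUu : IsUnit u := ⟨⟨u, h * star u, c2, c3⟩, rfl⟩
  set v : A := b * u with hv
  set w : A := b * star u with hw
  have hv_unit : IsUnit v := hb.mul hUu
  have hw_unit : IsUnit w := hb.mul hUu.star
  have hvv : star v * v = 1 := by
    rw [hv, star_mul, mul_assoc, ← mul_assoc (star b) b u, ← hh, ← mul_assoc]
    rw [mul_assoc (star u) h u] at *
    exact c1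
  have hww : star w * w = 1 := by
    rw [hw, star_mul, star_star, mul_assoc, ← mul_assoc (star b) b (star u), ← hh, ← mul_assoc,
      mul_assoc u h (star u)]
    exact c2
  have right_of_left : ∀ x : A, IsUnit x → star x * x = 1 → x * star x = 1 := by
    intro x hx hsx
    obtain ⟨X, rfl⟩ := hx
    have hinv : (↑X⁻¹ : A) = star (X : A) := Units.inv_eq_of_mul_eq_one_left hsx
    rw [← hinv, Units.mul_inv]
  refine ⟨v, w, Unitary.mem_iff.mpr ⟨hvv, right_of_left v hv_unit hvv⟩,
    Unitary.mem_iff.mpr ⟨hww, right_of_left w hw_unit hww⟩, ?_⟩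
  have hsum : u + star u = algebraMap ℂ A 2 := by
    rw [hu, hstaru, ← cfc_add (a := h) fp fm hpcont hmcont,
      cfc_congr (g := fun _ : ℂ => (2:ℂ)) (fun z _ => by simp [hfp, hfm]; ring),
      cfc_const 2 h]
  rw [hv, hw, ← mul_add, hsum]
  have h2 : algebraMap ℂ A 2 = (2 : A) := map_ofNat _ 2
  rw [h2, mul_two]




set_option maxHeartbeats 1000000 in
theorem frame_eq_sum_of_three_onbs
    {H : Type*} [NormedAddCommGroup H] [InnerProductSpace ℂ H]
    [CompleteSpace H] [TopologicalSpace.SeparableSpace H]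
    (hinf : ¬ FiniteDimensional ℂ H)
    (f : ℕ → H) (A B : ℝ) (hA : 0 < A) (hAB : A ≤ B)
    (hframe : ∀ x : H, A * ‖x‖ ^ 2 ≤ ∑' k, ‖⟪x, f k⟫_ℂ‖ ^ 2 ∧
      ∑' k, ‖⟪x, f k⟫_ℂ‖ ^ 2 ≤ B * ‖x‖ ^ 2)
    (T : lp (fun _ : ℕ => ℂ) 2 →L[ℂ] H)
    (hT : ∀ c : lp (fun _ : ℕ => ℂ) 2, T c = ∑' k, c k • f k)
    (ε : ℝ) (hε : ε ∈ Set.Ioo (0 : ℝ) 1) :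
    ∃ e₁ e₂ e₃ : HilbertBasis ℕ ℂ H, ∀ k : ℕ,
      f k = (‖T‖ / (1 - ε)) • (e₁ k + e₂ k + e₃ k) := by
  obtain ⟨hε0, hε1⟩ := hε
  set K := lp (fun _ : ℕ => ℂ) 2 with hK
  have hTδ : ∀ k : ℕ, T (lp.single 2 k (1:ℂ)) = f k := by
    intro k
    rw [hT]
    rw [tsum_eq_single k (fun j hj => by
      rw [lp.single_apply_ne 2 k _ hj, zero_smul])]
    rw [lp.single_apply_self, one_smul]
  have hHnt : Nontrivial H := by
    by_contra htriv
    rw [not_nontrivial_iff_subsingleton] at htriv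
    exact hinf (Module.Finite.of_finite)
  have hT0 : T ≠ 0 := by
    obtain ⟨x, hx⟩ := exists_ne (0 : H)
    have h1 := (hframe x).1
    have hpos : 0 < A * ‖x‖ ^ 2 := mul_pos hA (pow_pos (norm_pos_iff.2 hx) 2)
    have hex : ∃ k, ⟪x, f k⟫_ℂ ≠ 0 := by
      by_contra hall
      push_neg at hall
      have hz : ∑' k, ‖⟪x, f k⟫_ℂ‖ ^ 2 = 0 := by simp [hall]
      linarith
    obtain ⟨k, hk⟩ := hex
    intro hT0
    have hfk : f k = 0 := by rw [← hTδ k, hT0]; simp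
    exact hk (by simp [hfk])
  have hTpos : (0:ℝ) < ‖T‖ := norm_pos_iff.2 hT0
  obtain ⟨β⟩ := exists_nat_hilbertBasis hinf
  set c : ℝ := (1 - ε) / ‖T‖ with hc
  have hcpos : 0 < c := div_pos (by linarith) hTpos
  have hcT : c * ‖T‖ = 1 - ε := div_mul_cancel₀ _ hTpos.ne'
  set R : K →L[ℂ] K :=
    ((c : ℂ) • (β.repr.toLinearIsometry.toContinuousLinearMap.comp T) : K →L[ℂ] K) with hR
  have hRapp : ∀ x : K, R x = (c:ℂ) • β.repr (T x) := fun x => rfl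
  have hRnorm : ‖R‖ ≤ 1 - ε := by
    apply ContinuousLinearMap.opNorm_le_bound _ (by linarith)
    intro x
    rw [hRapp x, norm_smul]
    have : ‖β.repr (T x)‖ = ‖T x‖ := β.repr.norm_map _
    rw [this]
    have h2 : ‖(c:ℂ)‖ = c := by
      simp [Real.norm_eq_abs, abs_of_pos hcpos]
    rw [h2]
    calc c * ‖T x‖ ≤ c * (‖T‖ * ‖x‖) :=
          mul_le_mul_of_nonneg_left (T.le_opNorm x) hcpos.le
      _ = (1 - ε) * ‖x‖ := by rw [← hcT]; ring
  -- the operator b0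
  have hKnt : Nontrivial K := by
    obtain ⟨x, y, hxy⟩ := hHnt
    exact ⟨β.repr x, β.repr y, fun h => hxy (β.repr.injective h)⟩
  have hAnt : Nontrivial (K →L[ℂ] K) := by
    obtain ⟨x, hx⟩ := exists_ne (0 : K)
    refine ⟨1, 0, fun h10 => hx ?_⟩
    have := congrArg (fun (S : K →L[ℂ] K) => S x) h10
    simpa using this
  set b0 : K →L[ℂ] K := (2⁻¹ : ℂ) • (1 + R) with hb0
  have h1R : IsUnit (1 + R) := by
    have hnr : ‖-R‖ < 1 := by
      rw [norm_neg]; linarith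
    have := (Units.oneSub (-R) hnr).isUnit
    simpa [sub_neg_eq_add] using this
  have hb0unit : IsUnit b0 := by
    rw [hb0, Algebra.smul_def]
    exact ((isUnit_iff_ne_zero.2 (by norm_num : (2⁻¹ : ℂ) ≠ 0)).map
      (algebraMap ℂ (K →L[ℂ] K))).mul h1R
  have hb0norm : ‖b0‖ < 1 := by
    rw [hb0]
    have h2 : ‖(1 : K →L[ℂ] K) + R‖ ≤ 1 + (1 - ε) :=
      le_trans (norm_add_le _ _) (add_le_add ContinuousLinearMap.norm_id_le hRnorm)
    have h3 := norm_smul_le (2⁻¹ : ℂ) ((1 : K →L[ℂ] K) + R)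
    have h1 : ‖(2⁻¹ : ℂ)‖ = 2⁻¹ := by norm_num
    rw [h1] at h3
    calc ‖(2⁻¹ : ℂ) • ((1 : K →L[ℂ] K) + R)‖ ≤ 2⁻¹ * ‖(1 : K →L[ℂ] K) + R‖ := h3
      _ ≤ 2⁻¹ * (1 + (1 - ε)) := by nlinarith
      _ < 1 := by nlinarith
  obtain ⟨v, w, hvmem, hwmem, hvw⟩ := sum_two_unitaries b0 hb0unit hb0norm
  have hsum : v + w = 1 + R := by
    rw [hvw, hb0, ← add_smul]
    norm_num
  -- bases
  let Vv : K ≃ₗᵢ[ℂ] K := Unitary.linearIsometryEquiv ⟨v, hvmem⟩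
  let Vw : K ≃ₗᵢ[ℂ] K := Unitary.linearIsometryEquiv ⟨w, hwmem⟩
  let Vn : K ≃ₗᵢ[ℂ] K := LinearIsometryEquiv.neg ℂ
  let e₁ : HilbertBasis ℕ ℂ H := HilbertBasis.ofRepr (Vv.trans β.repr.symm).symm
  let e₂ : HilbertBasis ℕ ℂ H := HilbertBasis.ofRepr (Vw.trans β.repr.symm).symm
  let e₃ : HilbertBasis ℕ ℂ H := HilbertBasis.ofRepr (Vn.trans β.repr.symm).symm
  have he₁ : ∀ k, e₁ k = β.repr.symm (v (lp.single 2 k 1)) := by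
    intro k
    rw [← e₁.repr_symm_single]
    rfl
  have he₂ : ∀ k, e₂ k = β.repr.symm (w (lp.single 2 k 1)) := by
    intro k
    rw [← e₂.repr_symm_single]
    rfl
  have he₃ : ∀ k, e₃ k = -β.repr.symm (lp.single 2 k 1) := by
    intro k
    rw [← e₃.repr_symm_single]
    show β.repr.symm (-(lp.single 2 k 1)) = _
    rw [map_neg]
  refine ⟨e₁, e₂, e₃, fun k => ?_⟩
  have hkey : (c : ℂ) • f k = e₁ k + e₂ k + e₃ k := by
    have hRδ : R (lp.single 2 k 1) = (c:ℂ) • β.repr (f k) := by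
      rw [hRapp, hTδ]
    have hR' : R (lp.single 2 k 1)
        = v (lp.single 2 k 1) + w (lp.single 2 k 1) - lp.single 2 k 1 := by
      have := congrArg (fun (S : K →L[ℂ] K) => S (lp.single 2 k 1)) hsum
      simp only [ContinuousLinearMap.add_apply, ContinuousLinearMap.one_apply] at this
      rw [eq_sub_iff_add_eq, this]
      abel
    have := congrArg (β.repr.symm) (hRδ.symm.trans hR')
    rw [map_smul, β.repr.symm_apply_apply, map_sub, map_add] at this
    rw [this, he₁, he₂, he₃]
    abel
  rw [Complex.coe_smul] at hkey
  have hfin : f k = c⁻¹ • (e₁ k + e₂ k + e₃ k) := by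
    rw [← hkey, smul_smul, inv_mul_cancel₀ hcpos.ne', one_smul]
  rw [show ‖T‖ / (1 - ε) = c⁻¹ by rw [hc, inv_div]]
  exact hfin
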